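/- Let s ≥ 1 be an integer, q = 2^s, m ≥ 2 an even integer, and n = q^m − 1. Then C_{(q,m;0)}^⊥ = C̃_{(q,m;1)} and C_{(q,m;1)}^⊥ = C̃_{(q,m;0)}. -/
import Mathlib


open Finset

/-- The `q`-weight of a nonnegative integer: the sum of its base-`q` digits. -/
def qWeight (q i : ℕ) : ℕ := (Nat.digits q i).sum

/-- The set `T_{(q,m;j)} = {i : 1 ≤ i ≤ q^m − 2, wt_q(i) ≡ j (mod 2)}`. -/
def Tset (q m j : ℕ) : Set ℕ :=
  {i | 1 ≤ i ∧ i ≤ q ^ m - 2 ∧ qWeight q i % 2 = j}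

/-- The cyclic code of length `n` over `F` with defining set `T` with respect to `β ∈ E`:
all words `(c_0, …, c_{n-1})` with `∑_j c_j β^{k j} = 0` for every `k ∈ T`. -/
def cyclicCode (F E : Type*) [Field F] [Field E] [Algebra F E]
    (n : ℕ) (β : E) (T : Set ℕ) : Submodule F (Fin n → F) where
  carrier := {c | ∀ k ∈ T, ∑ j : Fin n, algebraMap F E (c j) * β ^ (k * (j : ℕ)) = 0}
  add_mem' := by
    intro a b ha hb k hk
    simp only [Set.mem_setOf_eq, Pi.add_apply, map_add, add_mul] at *
    rw [Finset.sum_add_distrib, ha k hk, hb k hk, add_zero]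
  zero_mem' := by
    intro k hk
    simp
  smul_mem' := by
    intro r c hc k hk
    simp only [Set.mem_setOf_eq, Pi.smul_apply, smul_eq_mul, map_mul, mul_assoc] at *
    rw [← Finset.mul_sum, hc k hk, mul_zero]

/-- The minimum distance of a code: the least Hamming weight of a nonzero codeword. -/
noncomputable def minDist {F : Type*} [Field F] [DecidableEq F] {n : ℕ}
    (C : Submodule F (Fin n → F)) : ℕ :=
  sInf {w | ∃ c ∈ C, c ≠ 0 ∧ hammingNorm c = w}

/-- The dual of a set of words: all words orthogonal (for the standard bilinear form)
to every word of the set. -/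
def dualSet {F : Type*} [Field F] {N : ℕ} (C : Set (Fin N → F)) : Set (Fin N → F) :=
  {u | ∀ v ∈ C, ∑ k : Fin N, u k * v k = 0}

lemma qWeight_eq {q : ℕ} (hq : 2 ≤ q) (i : ℕ) :
    qWeight q i = i % q + qWeight q (i / q) := by
  rcases Nat.eq_zero_or_pos i with h | h
  · simp [h, qWeight]
  · unfold qWeight
    rw [Nat.digits_def' hq h]
    simp

lemma qWeight_lt {q : ℕ} (hq : 2 ≤ q) {c : ℕ} (hc : c < q) : qWeight q c = c := by
  rw [qWeight_eq hq, Nat.mod_eq_of_lt hc, Nat.div_eq_of_lt hc]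
  simp [qWeight]

lemma qWeight_eq_zero {q : ℕ} (hq : 2 ≤ q) {i : ℕ} (h : qWeight q i = 0) : i = 0 := by
  induction i using Nat.strong_induction_on with
  | _ i ih =>
    rcases Nat.eq_zero_or_pos i with h0 | h0
    · exact h0
    · rw [qWeight_eq hq] at h
      have h1 : i % q = 0 := by omega
      have h2 : qWeight q (i / q) = 0 := by omega
      have h3 : i / q = 0 := ih _ (Nat.div_lt_self h0 (by omega)) h2
      have h4 := Nat.div_add_mod i q
      rw [h3] at h4
      omega

lemma qWeight_nooverlap {q : ℕ} (hq : 2 ≤ q) (t : ℕ) :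
    ∀ a r, r < q ^ t → qWeight q (a * q ^ t + r) = qWeight q a + qWeight q r := by
  induction t with
  | zero =>
    intro a r hr
    rw [pow_zero] at hr
    have : r = 0 := by omega
    subst this
    norm_num [qWeight]
  | succ t ih =>
    intro a r hr
    have hq0 : 0 < q := by omega
    have h1 : (a * q ^ (t+1) + r) % q = r % q := by
      rw [pow_succ, show a * (q ^ t * q) + r = r + (a * q ^ t) * q by ring]
      simp [Nat.add_mul_mod_self_right]
    have h2 : (a * q ^ (t+1) + r) / q = a * q ^ t + r / q := by
      rw [pow_succ, show a * (q ^ t * q) + r = r + (a * q ^ t) * q by ring]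
      rw [Nat.add_mul_div_right _ _ hq0]
      omega
    have h3 : r / q < q ^ t := by
      rw [Nat.div_lt_iff_lt_mul hq0, ← pow_succ]; exact hr
    rw [qWeight_eq hq, h1, h2, ih a _ h3, qWeight_eq hq r]
    ring

lemma qWeight_add_compl {q : ℕ} (hq : 2 ≤ q) :
    ∀ m i j, i + j = q ^ m - 1 → qWeight q i + qWeight q j = m * (q - 1) := by
  intro m
  induction m with
  | zero => intro i j h; simp at h; obtain ⟨h1, h2⟩ := h; simp [h1, h2, qWeight]
  | succ m ih =>
    intro i j h
    have hq0 : 0 < q := by omega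
    have hqm : 1 ≤ q ^ m := Nat.one_le_pow _ _ hq0
    have hi := Nat.div_add_mod i q
    have hj := Nat.div_add_mod j q
    have hmodlt : i % q < q := Nat.mod_lt _ hq0
    have hmodlt' : j % q < q := Nat.mod_lt _ hq0
    have hsum : q * (i / q) + q * (j / q) + (i % q + j % q + 1) = q * q ^ m := by
      have hpm : 1 ≤ q ^ (m+1) := Nat.one_le_pow _ _ hq0
      have h5 : i + j + 1 = q ^ (m+1) := by omega
      rw [pow_succ, mul_comm (q ^ m) q] at h5
      omega
    have hdvd : q ∣ (i % q + j % q + 1) := by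
      have h3 : i % q + j % q + 1 = q * q ^ m - (q * (i / q) + q * (j / q)) := by omega
      rw [h3]
      exact Nat.dvd_sub (Dvd.intro _ rfl) (Nat.dvd_add (Dvd.intro _ rfl) (Dvd.intro _ rfl))
    obtain ⟨d, hd⟩ := hdvd
    have hd0 : d ≠ 0 := by rintro rfl; omega
    have hd2 : d < 2 := by
      by_contra hc
      push_neg at hc
      have : q * 2 ≤ q * d := Nat.mul_le_mul_left q hc
      omega
    have hd1 : d = 1 := by omega
    rw [hd1, mul_one] at hd
    have hbb : i % q + j % q = q - 1 := by omega
    have haa : i / q + j / q = q ^ m - 1 := by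
      have hc : q * (i / q + j / q + 1) = q * q ^ m := by rw [mul_add, mul_add, mul_one]; omega
      have := Nat.eq_of_mul_eq_mul_left hq0 hc
      omega
    have hih := ih (i / q) (j / q) haa
    rw [qWeight_eq hq i, qWeight_eq hq j]
    have hmq : (m + 1) * (q - 1) = m * (q - 1) + (q - 1) := by ring
    omega

lemma qWeight_mul_q {q m : ℕ} (hq : 2 ≤ q) (hm : 1 ≤ m) {i : ℕ} (hi : i ≤ q ^ m - 2) :
    qWeight q ((q * i) % (q ^ m - 1)) = qWeight q i := by
  have hq0 : 0 < q := by omega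
  obtain ⟨m', rfl⟩ : ∃ m', m = m' + 1 := ⟨m - 1, by omega⟩
  have hpm : q ^ (m' + 1) = q ^ m' * q := pow_succ q m'
  rw [hpm] at hi ⊢
  obtain ⟨P, hP⟩ : ∃ P, q ^ m' = P := ⟨_, rfl⟩
  have hP1 : 1 ≤ P := hP ▸ Nat.one_le_pow _ _ hq0
  rw [hP] at hi ⊢
  have hPq2 : 2 ≤ P * q := by simpa using Nat.mul_le_mul hP1 hq
  have hir : P * (i / P) + i % P = i := Nat.div_add_mod i P
  have hrP : i % P < P := Nat.mod_lt _ (by omega)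
  have hcq : i / P < q := Nat.div_lt_of_lt_mul (show i < P * q by omega)
  obtain ⟨c, hc⟩ : ∃ c, i / P = c := ⟨_, rfl⟩
  obtain ⟨r, hr⟩ : ∃ r, i % P = r := ⟨_, rfl⟩
  rw [hc] at hir hcq
  rw [hr] at hir hrP
  have hPq1 : 1 ≤ P * q := by omega
  have hi' : (i : ℤ) = (P : ℤ) * c + r := by exact_mod_cast hir.symm
  have hkey : q * i = c * (P * q - 1) + (q * r + c) := by
    zify [hPq1]
    rw [hi']
    ring
  have hlt : q * r + c < P * q - 1 := by
    have h3 : (c : ℤ) ≤ (q : ℤ) - 1 := by omega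
    have h4 : (r : ℤ) ≤ (P : ℤ) - 1 := by omega
    have h6 : (P : ℤ) * c + r ≤ (P : ℤ) * q - 2 := by
      have h2 : (i : ℤ) ≤ ((P * q : ℕ) : ℤ) - 2 := by omega
      push_cast at h2
      rw [hi'] at h2
      exact h2
    have hqz : (2 : ℤ) ≤ (q : ℤ) := by omega
    have hPz : (1 : ℤ) ≤ (P : ℤ) := by omega
    have goal : (q : ℤ) * r + c < (P : ℤ) * q - 1 := by
      rcases le_or_gt (r : ℤ) ((P : ℤ) - 2) with hA | hB
      · have e1 : (q : ℤ) * r ≤ (q : ℤ) * ((P : ℤ) - 2) :=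
          mul_le_mul_of_nonneg_left hA (by linarith)
        linarith [e1, h3, hqz, hPz]
      · have hB' : (r : ℤ) = (P : ℤ) - 1 := by omega
        have e2 : (c : ℤ) ≤ (q : ℤ) - 2 := by
          by_contra hcon
          push_neg at hcon
          have hge : (q : ℤ) - 1 ≤ (c : ℤ) := by omega
          have : (P : ℤ) * ((q : ℤ) - 1) ≤ (P : ℤ) * c :=
            mul_le_mul_of_nonneg_left hge (by linarith)
          linarith [this, h6, hB', hPz]
        have e3 : (q : ℤ) * r = (q : ℤ) * (P : ℤ) - q := by rw [hB']; ring
        linarith [e3, e2, hqz, hPz]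
    zify [hPq1]
    push_cast
    linarith [goal]
  have hmod : (q * i) % (P * q - 1) = q * r + c := by
    rw [hkey, add_comm, Nat.add_mul_mod_self_right, Nat.mod_eq_of_lt hlt]
  rw [hmod]
  have e1 : qWeight q (q * r + c) = qWeight q r + c := by
    have h : q * r + c = r * q ^ 1 + c := by ring
    rw [h, qWeight_nooverlap hq 1 _ _ (by rwa [pow_one]), qWeight_lt hq hcq]
  have e2 : qWeight q i = c + qWeight q r := by
    have h : i = c * q ^ m' + r := by rw [hP, mul_comm c P]; omega
    rw [h, qWeight_nooverlap hq m' _ _ (by rwa [hP]), qWeight_lt hq hcq]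
  omega

section TsetLemmas
variable {q m : ℕ} (hq2 : 2 ≤ q) (hm2 : 2 ≤ m)
include hq2 hm2

lemma hqm4 : 4 ≤ q ^ m := by
  calc 4 = 2 ^ 2 := rfl
    _ ≤ q ^ 2 := Nat.pow_le_pow_left hq2 2
    _ ≤ q ^ m := Nat.pow_le_pow_right (by omega) hm2

lemma Tset_lt {jj : ℕ} : ∀ k ∈ Tset q m jj, k < q ^ m - 1 := by
  have h4 := hqm4 hq2 hm2
  intro k hk
  obtain ⟨h1, h2, h3⟩ := hk
  omega

lemma TsetU_lt {jj : ℕ} : ∀ k ∈ Tset q m jj ∪ {0}, k < q ^ m - 1 := by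
  have h4 := hqm4 hq2 hm2
  intro k hk
  rcases hk with hk | hk
  · exact Tset_lt hq2 hm2 k hk
  · rw [Set.mem_singleton_iff] at hk; omega

lemma Tset_cov {a b : ℕ} (hab : a + b = 1) :
    ∀ k, k < q ^ m - 1 → k ∉ Tset q m a → k ∈ Tset q m b ∪ {0} := by
  intro k hk hka
  rcases Nat.eq_zero_or_pos k with rfl | hk0
  · right; rfl
  · left
    refine ⟨hk0, by omega, ?_⟩
    have h2 : qWeight q k % 2 < 2 := Nat.mod_lt _ (by omega)
    have h3 : ¬ (1 ≤ k ∧ k ≤ q ^ m - 2 ∧ qWeight q k % 2 = a) := hka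
    omega

lemma Tset_disj {a b : ℕ} (hab : a + b = 1) :
    ∀ k, k ∈ Tset q m a → k ∈ Tset q m b ∪ {0} → False := by
  intro k hka hkb
  obtain ⟨h1, h2, h3⟩ := hka
  rcases hkb with hkb | hkb
  · obtain ⟨_, _, h6⟩ := hkb; omega
  · rw [Set.mem_singleton_iff] at hkb; omega

lemma Tset_neg (hmeven : Even m) {jj : ℕ} :
    ∀ k ∈ Tset q m jj ∪ {0}, ((q ^ m - 1) - k) % (q ^ m - 1) ∈ Tset q m jj ∪ {0} := by
  have h4 := hqm4 hq2 hm2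
  intro k hk
  rcases hk with hk | hk
  · obtain ⟨h1, h2, h3⟩ := hk
    left
    have hlt : (q ^ m - 1) - k < q ^ m - 1 := by omega
    rw [Nat.mod_eq_of_lt hlt]
    have hsum : qWeight q ((q ^ m - 1) - k) + qWeight q k = m * (q - 1) :=
      qWeight_add_compl hq2 m _ k (by omega)
    have heven : (m * (q - 1)) % 2 = 0 :=
      Nat.even_iff.mp (hmeven.mul_right _)
    refine ⟨?_, by omega, ?_⟩
    · omega
    · omega
  · rw [Set.mem_singleton_iff] at hk
    subst hk
    right
    simp [Nat.sub_zero, Nat.mod_self]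

lemma Tset_mulq {jj : ℕ} :
    ∀ k ∈ Tset q m jj ∪ {0}, (q * k) % (q ^ m - 1) ∈ Tset q m jj ∪ {0} := by
  have h4 := hqm4 hq2 hm2
  intro k hk
  rcases hk with hk | hk
  · obtain ⟨h1, h2, h3⟩ := hk
    left
    have hw : qWeight q ((q * k) % (q ^ m - 1)) = qWeight q k :=
      qWeight_mul_q hq2 (by omega) h2
    have hlt : (q * k) % (q ^ m - 1) < q ^ m - 1 := Nat.mod_lt _ (by omega)
    have hne : (q * k) % (q ^ m - 1) ≠ 0 := by
      intro hcon
      rw [hcon] at hw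
      have : qWeight q 0 = 0 := by simp [qWeight]
      have hk0 : k = 0 := qWeight_eq_zero hq2 (by omega)
      omega
    exact ⟨by omega, by omega, by omega⟩
  · rw [Set.mem_singleton_iff] at hk
    subst hk
    right
    simp
end TsetLemmas


section Alg
variable {F E : Type*} [Field F] [Fintype F] [DecidableEq F] [Field E] [Fintype E] [Algebra F E]

lemma pow_congr' {n : ℕ} (hn : 0 < n) {β : E} (hβ : orderOf β = n) {a b : ℕ}
    (h : (a : ZMod n) = (b : ZMod n)) : β ^ a = β ^ b := by
  have hβ1 : β ^ n = 1 := by rw [← hβ]; exact pow_orderOf_eq_one β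
  have key : ∀ c : ℕ, β ^ c = β ^ (c % n) := by
    intro c
    conv_lhs => rw [← Nat.mod_add_div c n]
    rw [pow_add, pow_mul, hβ1, one_pow, mul_one]
  have h' : a % n = b % n := (ZMod.natCast_eq_natCast_iff a b n).mp h
  rw [key a, key b, h']

lemma geom_sum' {n : ℕ} (hn : 0 < n) {β : E} (hβ : orderOf β = n) (a : ℕ) :
    ∑ j : Fin n, (β ^ a) ^ (j : ℕ) = if (a : ZMod n) = 0 then (n : E) else 0 := by
  haveI : NeZero n := ⟨hn.ne'⟩
  by_cases h : (a : ZMod n) = 0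
  · rw [if_pos h]
    have hdvd : n ∣ a := (ZMod.natCast_eq_zero_iff a n).mp h
    have h1 : β ^ a = 1 := by
      rw [← hβ] at hdvd
      exact orderOf_dvd_iff_pow_eq_one.mp hdvd
    simp [h1]
  · rw [if_neg h]
    have hne : β ^ a ≠ 1 := by
      intro hcon
      apply h
      have : n ∣ a := hβ ▸ orderOf_dvd_iff_pow_eq_one.mpr hcon
      exact (ZMod.natCast_eq_zero_iff a n).mpr this
    rw [Fin.sum_univ_eq_sum_range (fun j => (β ^ a) ^ j) n, geom_sum_eq hne]
    have hβ1 : β ^ n = 1 := by rw [← hβ]; exact pow_orderOf_eq_one β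
    have : (β ^ a) ^ n = 1 := by
      rw [← pow_mul, mul_comm, pow_mul, hβ1, one_pow]
    rw [this]
    simp


-- characteristic 2
lemma charE {s q m : ℕ} (hs : 1 ≤ s) (hq : q = 2 ^ s) (hm : 1 ≤ m)
    (hE : Fintype.card E = q ^ m) : CharP E 2 := by
  set p := ringChar E with hp
  haveI : CharP E p := ringChar.charP E
  have hprime : p.Prime := CharP.char_is_prime E p
  have hdvd : p ∣ Fintype.card E := by
    have h0 : ((Fintype.card E : ℕ) : E) = 0 := FiniteField.cast_card_eq_zero E
    exact (CharP.cast_eq_zero_iff E p _).mp h0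
  rw [hE, hq, ← pow_mul] at hdvd
  have h2 : p ∣ 2 := Nat.Prime.dvd_of_dvd_pow hprime hdvd
  have : p = 2 := (Nat.prime_dvd_prime_iff_eq hprime Nat.prime_two).mp h2
  rw [← this]
  exact ringChar.charP E

lemma sum_pow_two_pow [CharP E 2] {ι : Type*} (G : Finset ι) (g : ι → E) (t : ℕ) :
    (∑ x ∈ G, g x) ^ (2 ^ t) = ∑ x ∈ G, (g x) ^ (2 ^ t) := by
  haveI : Fact (Nat.Prime 2) := ⟨Nat.prime_two⟩
  haveI : ExpChar E 2 := ExpChar.prime Nat.prime_two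
  calc (∑ x ∈ G, g x) ^ (2 ^ t) = iterateFrobenius E 2 t (∑ x ∈ G, g x) := by
        rw [iterateFrobenius_def]
    _ = ∑ x ∈ G, iterateFrobenius E 2 t (g x) := map_sum _ _ _
    _ = ∑ x ∈ G, (g x) ^ (2 ^ t) := by simp [iterateFrobenius_def]

lemma exists_preimage {q : ℕ} (hq2 : 2 ≤ q) (hF : Fintype.card F = q)
    (x : E) (hx : x ^ q = x) : ∃ a : F, algebraMap F E a = x := by
  classical
  set P : Polynomial E := Polynomial.X ^ q - Polynomial.X with hP
  have hPne : P ≠ 0 := by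
    intro hcon
    have : P.coeff q = 1 := by
      rw [hP]
      rw [Polynomial.coeff_sub, Polynomial.coeff_X_pow, Polynomial.coeff_X]
      simp only [if_pos rfl]
      rw [if_neg (by omega : ¬ (1 = q))]
      simp
    rw [hcon] at this
    simp at this
  have hdeg : P.natDegree ≤ q := by
    rw [hP]
    refine le_trans (Polynomial.natDegree_sub_le _ _) ?_
    simp [Polynomial.natDegree_X_pow, Polynomial.natDegree_X]
    omega
  set A : Finset E := Finset.univ.image (algebraMap F E) with hA
  have hcardA : A.card = q := by
    rw [hA, Finset.card_image_of_injective _ (algebraMap F E).injective, Finset.card_univ, hF]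
  set B : Finset E := P.roots.toFinset with hB
  have hroot : ∀ y : E, y ^ q = y → y ∈ B := by
    intro y hy
    rw [hB, Multiset.mem_toFinset, Polynomial.mem_roots hPne]
    show P.eval y = 0
    simp [hP, hy]
  have hAB : A ⊆ B := by
    intro y hy
    rw [hA, Finset.mem_image] at hy
    obtain ⟨a, _, rfl⟩ := hy
    apply hroot
    rw [← map_pow]
    congr 1
    rw [← hF]
    exact FiniteField.pow_card a
  have hcardB : B.card ≤ q := by
    calc B.card ≤ Multiset.card P.roots := Multiset.toFinset_card_le _
      _ ≤ P.natDegree := Polynomial.card_roots' P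
      _ ≤ q := hdeg
  have heq : A = B := Finset.eq_of_subset_of_card_le hAB (by omega)
  have hxB : x ∈ B := hroot x hx
  rw [← heq, hA, Finset.mem_image] at hxB
  obtain ⟨a, _, ha⟩ := hxB
  exact ⟨a, ha⟩

lemma trace_nondegen {q m : ℕ} (hq2 : 2 ≤ q) (hm : 1 ≤ m)
    (hE : Fintype.card E = q ^ m) (w : E)
    (hw : ∀ γ : E, ∑ i ∈ range m, (γ * w) ^ (q ^ i) = 0) : w = 0 := by
  classical
  by_contra hwne
  have hall : ∀ x : E, ∑ i ∈ range m, x ^ (q ^ i) = 0 := by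
    intro x
    have := hw (x * w⁻¹)
    rwa [mul_assoc, inv_mul_cancel₀ hwne, mul_one] at this
  set P : Polynomial E := ∑ i ∈ range m, Polynomial.X ^ (q ^ i) with hP
  have hcoeff : P.coeff (q ^ (m - 1)) = 1 := by
    rw [hP, Polynomial.finset_sum_coeff]
    rw [Finset.sum_congr rfl (fun i _ => Polynomial.coeff_X_pow (q ^ i) (q ^ (m-1)))]
    have : ∀ i ∈ range m, (if q ^ (m-1) = q ^ i then (1:E) else 0) = if i = m - 1 then 1 else 0 := by
      intro i _
      have hiff : (q ^ (m-1) = q ^ i) ↔ (i = m - 1) :=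
        ⟨fun h => (Nat.pow_right_injective hq2 h).symm, fun h => by rw [h]⟩
      rw [if_congr hiff rfl rfl]
    rw [Finset.sum_congr rfl this, Finset.sum_ite_eq' (range m) (m-1) (fun _ => (1:E))]
    simp [Finset.mem_range]
    omega
  have hPne : P ≠ 0 := fun hcon => by simp [hcon] at hcoeff
  have hdeg : P.natDegree ≤ q ^ (m - 1) := by
    rw [hP]
    apply Polynomial.natDegree_sum_le_of_forall_le
    intro i hi
    rw [Polynomial.natDegree_X_pow]
    exact Nat.pow_le_pow_right (by omega) (by simp [Finset.mem_range] at hi; omega)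
  have hroots : (Finset.univ : Finset E) ⊆ P.roots.toFinset := by
    intro x _
    rw [Multiset.mem_toFinset, Polynomial.mem_roots hPne]
    show P.eval x = 0
    rw [hP, Polynomial.eval_finset_sum]
    simpa using hall x
  have hcard : Fintype.card E ≤ q ^ (m - 1) := by
    calc Fintype.card E = (Finset.univ : Finset E).card := (Finset.card_univ).symm
      _ ≤ P.roots.toFinset.card := Finset.card_le_card hroots
      _ ≤ Multiset.card P.roots := Multiset.toFinset_card_le _
      _ ≤ P.natDegree := Polynomial.card_roots' P
      _ ≤ q ^ (m - 1) := hdeg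
  rw [hE] at hcard
  have : q ^ (m - 1) < q ^ m := Nat.pow_lt_pow_right (by omega) (by omega)
  omega


lemma pairing {n : ℕ} (hn : 0 < n) {β : E} (hβ : orderOf β = n) (u v : Fin n → F) :
    ∑ k : Fin n, (∑ j : Fin n, algebraMap F E (u j) * β ^ (((n - (k:ℕ)) % n) * (j:ℕ))) *
      (∑ j : Fin n, algebraMap F E (v j) * β ^ ((k:ℕ) * (j:ℕ)))
    = (n : E) * ∑ j : Fin n, algebraMap F E (u j) * algebraMap F E (v j) := by
  haveI : NeZero n := ⟨hn.ne'⟩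
  have key : ∀ k : Fin n, ∀ j j' : Fin n,
      algebraMap F E (u j) * β ^ (((n - (k:ℕ)) % n) * (j:ℕ)) *
        (algebraMap F E (v j') * β ^ ((k:ℕ) * (j':ℕ)))
      = algebraMap F E (u j) * algebraMap F E (v j') *
          (β ^ (((n-1) * (j:ℕ) + (j':ℕ)))) ^ (k:ℕ) := by
    intro k j j'
    have hcast : ((((n - (k:ℕ)) % n) * (j:ℕ) + (k:ℕ) * (j':ℕ) : ℕ) : ZMod n)
        = ((((n-1) * (j:ℕ) + (j':ℕ)) * (k:ℕ) : ℕ) : ZMod n) := by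
      push_cast [ZMod.natCast_mod, Nat.cast_sub (le_of_lt k.isLt), Nat.cast_sub (by omega : 1 ≤ n)]
      rw [ZMod.natCast_self]
      ring
    have := pow_congr' hn hβ hcast
    rw [pow_add] at this
    calc algebraMap F E (u j) * β ^ (((n - (k:ℕ)) % n) * (j:ℕ)) *
          (algebraMap F E (v j') * β ^ ((k:ℕ) * (j':ℕ)))
        = algebraMap F E (u j) * algebraMap F E (v j') *
          (β ^ (((n - (k:ℕ)) % n) * (j:ℕ)) * β ^ ((k:ℕ) * (j':ℕ))) := by ring
      _ = algebraMap F E (u j) * algebraMap F E (v j') *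
          β ^ ((((n-1) * (j:ℕ) + (j':ℕ)) * (k:ℕ))) := by rw [this]
      _ = _ := by rw [pow_mul]
  calc ∑ k : Fin n, (∑ j : Fin n, algebraMap F E (u j) * β ^ (((n - (k:ℕ)) % n) * (j:ℕ))) *
        (∑ j : Fin n, algebraMap F E (v j) * β ^ ((k:ℕ) * (j:ℕ)))
      = ∑ k : Fin n, ∑ j : Fin n, ∑ j' : Fin n,
          algebraMap F E (u j) * algebraMap F E (v j') *
            (β ^ (((n-1) * (j:ℕ) + (j':ℕ)))) ^ (k:ℕ) := by
        refine Finset.sum_congr rfl fun k _ => ?_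
        rw [Finset.sum_mul_sum]
        exact Finset.sum_congr rfl fun j _ => Finset.sum_congr rfl fun j' _ => key k j j'
    _ = ∑ j : Fin n, ∑ j' : Fin n,
          algebraMap F E (u j) * algebraMap F E (v j') *
            ∑ k : Fin n, (β ^ (((n-1) * (j:ℕ) + (j':ℕ)))) ^ (k:ℕ) := by
        rw [Finset.sum_comm]
        refine Finset.sum_congr rfl fun j _ => ?_
        rw [Finset.sum_comm]
        refine Finset.sum_congr rfl fun j' _ => ?_
        rw [Finset.mul_sum]
    _ = ∑ j : Fin n, ∑ j' : Fin n,
          algebraMap F E (u j) * algebraMap F E (v j') *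
            (if j' = j then (n : E) else 0) := by
        refine Finset.sum_congr rfl fun j _ => Finset.sum_congr rfl fun j' _ => ?_
        rw [geom_sum' hn hβ]
        congr 1
        have hiff : ((((n-1) * (j:ℕ) + (j':ℕ) : ℕ)) : ZMod n) = 0 ↔ j' = j := by
          push_cast [Nat.cast_sub (by omega : 1 ≤ n)]
          rw [ZMod.natCast_self]
          constructor
          · intro h
            have h2 : ((j':ℕ) : ZMod n) = ((j:ℕ) : ZMod n) := by
              have : ((0:ZMod n) - 1) * (j:ℕ) + (j':ℕ) = 0 ↔ ((j':ℕ):ZMod n) = (j:ℕ) := by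
                constructor
                · intro hh
                  have : ((j':ℕ):ZMod n) = 1 * (j:ℕ) - 0 * (j:ℕ) := by linear_combination hh
                  simpa using this
                · intro hh; rw [hh]; ring
              exact this.mp h
            have := congrArg ZMod.val h2
            rw [ZMod.val_cast_of_lt j'.isLt, ZMod.val_cast_of_lt j.isLt] at this
            exact Fin.ext this
          · intro h
            rw [h]
            ring
        rw [if_congr hiff rfl rfl]
    _ = ∑ j : Fin n, algebraMap F E (u j) * algebraMap F E (v j) * (n : E) := by
        refine Finset.sum_congr rfl fun j _ => ?_
        rw [Finset.sum_congr rfl (fun j' _ => mul_ite (j' = j)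
          (algebraMap F E (u j) * algebraMap F E (v j')) ((n:E)) 0)]
        simp only [mul_zero]
        rw [Finset.sum_ite_eq' Finset.univ j
          (fun j' => algebraMap F E (u j) * algebraMap F E (v j') * (n:E))]
        simp
    _ = (n : E) * ∑ j : Fin n, algebraMap F E (u j) * algebraMap F E (v j) := by
        rw [← Finset.sum_mul]
        ring

lemma mem_cyclicCode {n : ℕ} {β : E} {T : Set ℕ} {c : Fin n → F} :
    c ∈ (cyclicCode F E n β T : Set (Fin n → F)) ↔
      ∀ k ∈ T, ∑ j : Fin n, algebraMap F E (c j) * β ^ (k * (j : ℕ)) = 0 :=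
  Iff.rfl

lemma dual_cyclic {s q m n : ℕ} (hs : 1 ≤ s) (hq : q = 2 ^ s) (hm1 : 1 ≤ m)
    (hn : n = q ^ m - 1)
    (hF : Fintype.card F = q) (hE : Fintype.card E = q ^ m)
    {β : E} (hβ : orderOf β = n)
    (S T : Set ℕ)
    (hSlt : ∀ k ∈ S, k < n) (hTlt : ∀ k ∈ T, k < n)
    (hcov : ∀ k, k < n → k ∉ S → k ∈ T)
    (hdisj : ∀ k, k ∈ S → k ∈ T → False)
    (hTneg : ∀ k ∈ T, (n - k) % n ∈ T)
    (hTq : ∀ k ∈ T, (q * k) % n ∈ T) :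
    dualSet (cyclicCode F E n β S : Set (Fin n → F)) =
      (cyclicCode F E n β T : Set (Fin n → F)) := by
  classical
  have hq2 : 2 ≤ q := by rw [hq]; calc 2 = 2^1 := (pow_one 2).symm
                                       _ ≤ 2^s := Nat.pow_le_pow_right (by omega) hs
  have hqm4 : 2 ≤ q ^ m := le_trans hq2 (Nat.le_self_pow (by omega) q)
  have hn0 : 0 < n := by omega
  haveI : NeZero n := ⟨hn0.ne'⟩
  haveI : CharP E 2 := charE hs hq hm1 hE
  have hnE : (n : E) ≠ 0 := by
    have h1 : ((q ^ m : ℕ) : E) = 0 := by rw [← hE]; exact FiniteField.cast_card_eq_zero E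
    have h2 : (n : E) = ((q ^ m : ℕ) : E) - 1 := by
      rw [hn, Nat.cast_sub (by omega)]
      simp
    rw [h2, h1]
    simp
  have hsum_pow_q_pow : ∀ {ι : Type} (G : Finset ι) (g : ι → E) (i : ℕ),
      (∑ x ∈ G, g x) ^ (q ^ i) = ∑ x ∈ G, (g x) ^ (q ^ i) := by
    intro ι G g i
    rw [hq, ← pow_mul]
    exact sum_pow_two_pow G g (s * i)
  have hpow_qm : ∀ x : E, x ^ (q ^ m) = x := by
    intro x
    rw [← hE]
    exact FiniteField.pow_card x
  have haMq : ∀ (a : F) (i : ℕ), (algebraMap F E a) ^ (q ^ i) = algebraMap F E a := by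
    intro a i
    induction i with
    | zero => simp
    | succ i ih =>
      rw [pow_succ, pow_mul, ih, ← map_pow, ← hF, FiniteField.pow_card]
  ext u
  constructor
  · -- hard direction: dual ⊆ C_T
    intro hu
    rw [mem_cyclicCode]
    intro k hkT
    have hklt : k < n := hTlt k hkT
    set k' := (n - k) % n with hk'
    have hk'T : k' ∈ T := hTneg k hkT
    have hk'lt : k' < n := Nat.mod_lt _ hn0
    have hqclosed : ∀ i : ℕ, ((k' * q ^ i) % n) ∈ T := by
      intro i
      induction i with
      | zero => simpa [Nat.mod_eq_of_lt hk'lt] using hk'T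
      | succ i ih =>
        have heq : (k' * q ^ (i+1)) % n = (q * ((k' * q ^ i) % n)) % n := by
          have h1 : k' * q ^ (i+1) = q * (k' * q ^ i) := by ring
          rw [h1]
          exact (Nat.ModEq.mul_left q (Nat.mod_modEq (k' * q ^ i) n)).symm
        rw [heq]
        exact hTq _ ih
    -- the key: for every γ, trace-like sum vanishes
    have hw : ∀ γ : E, ∑ i ∈ range m,
        (γ * (∑ j : Fin n, algebraMap F E (u j) * β ^ (k' * (n - (j:ℕ))))) ^ (q ^ i) = 0 := by
      intro γ
      set y : Fin n → E := fun j => γ * β ^ (k' * (n - (j:ℕ))) with hy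
      set vt : Fin n → E := fun j => ∑ i ∈ range m, (y j) ^ (q ^ i) with hvt
      have hvtq : ∀ j, (vt j) ^ q = vt j := by
        intro j
        have h1 : (vt j) ^ q = ∑ i ∈ range m, (y j) ^ (q ^ (i+1)) := by
          rw [hvt]
          simp only []
          have := hsum_pow_q_pow (range m) (fun i => (y j) ^ (q ^ i)) 1
          rw [pow_one] at this
          rw [this]
          refine Finset.sum_congr rfl fun i _ => ?_
          rw [← pow_mul, ← pow_succ]
        rw [h1]
        obtain ⟨M, rfl⟩ : ∃ M, m = M + 1 := ⟨m - 1, by omega⟩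
        have h2 : vt j = ∑ x ∈ range M, (y j) ^ (q ^ (x+1)) + (y j) ^ (q ^ 0) := by
          simp only [hvt]
          exact Finset.sum_range_succ' (fun i => (y j) ^ (q ^ i)) M
        rw [Finset.sum_range_succ (fun i => (y j) ^ (q ^ (i+1))) M, h2]
        congr 1
        rw [hpow_qm (y j), pow_zero, pow_one]
      have hex : ∀ j, ∃ a : F, algebraMap F E a = vt j := fun j =>
        exists_preimage hq2 hF (vt j) (hvtq j)
      choose v hv using hex
      have hvC : v ∈ (cyclicCode F E n β S : Set (Fin n → F)) := by
        rw [mem_cyclicCode]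
        intro t htS
        have htlt : t < n := hSlt t htS
        calc ∑ j : Fin n, algebraMap F E (v j) * β ^ (t * (j:ℕ))
            = ∑ j : Fin n, ∑ i ∈ range m, γ ^ (q ^ i) *
                (β ^ (((n-1) * k' * q ^ i + t))) ^ (j : ℕ) := by
              refine Finset.sum_congr rfl fun j _ => ?_
              rw [hv j, hvt]
              simp only []
              rw [Finset.sum_mul]
              refine Finset.sum_congr rfl fun i _ => ?_
              rw [hy]
              simp only []
              rw [mul_pow, ← pow_mul, ← pow_mul]
              rw [mul_assoc]
              congr 1
              rw [← pow_add]
              apply pow_congr' hn0 hβ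
              push_cast [Nat.cast_sub (le_of_lt (j.isLt)), Nat.cast_sub (by omega : 1 ≤ n)]
              rw [ZMod.natCast_self]
              ring
          _ = ∑ i ∈ range m, γ ^ (q ^ i) *
                ∑ j : Fin n, (β ^ (((n-1) * k' * q ^ i + t))) ^ (j : ℕ) := by
              rw [Finset.sum_comm]
              exact Finset.sum_congr rfl fun i _ => by rw [Finset.mul_sum]
          _ = 0 := by
              refine Finset.sum_eq_zero fun i _ => ?_
              rw [geom_sum' hn0 hβ]
              rw [if_neg, mul_zero]
              intro hcon
              -- derive t ≡ k' q^i, so t = (k' q^i) % n ∈ T, contradiction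
              have h1 : ((t : ℕ) : ZMod n) = (((k' * q ^ i) % n : ℕ) : ZMod n) := by
                rw [ZMod.natCast_mod]
                push_cast [Nat.cast_sub (by omega : 1 ≤ n)] at hcon ⊢
                rw [ZMod.natCast_self] at hcon
                linear_combination hcon
              have h2 : t = (k' * q ^ i) % n := by
                have := congrArg ZMod.val h1
                rwa [ZMod.val_cast_of_lt htlt, ZMod.val_cast_of_lt (Nat.mod_lt _ hn0)] at this
              exact hdisj t htS (h2 ▸ hqclosed i)
      have horto := hu v hvC
      calc ∑ i ∈ range m,
          (γ * (∑ j : Fin n, algebraMap F E (u j) * β ^ (k' * (n - (j:ℕ))))) ^ (q ^ i)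
          = ∑ i ∈ range m, (∑ j : Fin n,
              algebraMap F E (u j) * y j) ^ (q ^ i) := by
            refine Finset.sum_congr rfl fun i _ => ?_
            congr 1
            rw [Finset.mul_sum]
            refine Finset.sum_congr rfl fun j _ => ?_
            rw [hy]
            simp only []
            ring
        _ = ∑ i ∈ range m, ∑ j : Fin n,
              (algebraMap F E (u j) * y j) ^ (q ^ i) := by
            exact Finset.sum_congr rfl fun i _ => hsum_pow_q_pow _ _ i
        _ = ∑ j : Fin n, algebraMap F E (u j) * vt j := by
            rw [Finset.sum_comm]
            refine Finset.sum_congr rfl fun j _ => ?_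
            rw [hvt]
            simp only []
            rw [Finset.mul_sum]
            refine Finset.sum_congr rfl fun i _ => ?_
            rw [mul_pow, haMq (u j) i]
        _ = ∑ j : Fin n, algebraMap F E (u j * v j) := by
            refine Finset.sum_congr rfl fun j _ => ?_
            rw [map_mul, hv j]
        _ = algebraMap F E (∑ j : Fin n, u j * v j) := (map_sum _ _ _).symm
        _ = 0 := by rw [horto, map_zero]
    have hw0 : (∑ j : Fin n, algebraMap F E (u j) * β ^ (k' * (n - (j:ℕ)))) = 0 :=
      trace_nondegen hq2 hm1 hE _ hw
    calc ∑ j : Fin n, algebraMap F E (u j) * β ^ (k * (j:ℕ))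
        = ∑ j : Fin n, algebraMap F E (u j) * β ^ (k' * (n - (j:ℕ))) := by
          refine Finset.sum_congr rfl fun j _ => ?_
          congr 1
          apply pow_congr' hn0 hβ
          rw [hk']
          push_cast [ZMod.natCast_mod, Nat.cast_sub (le_of_lt (j.isLt)),
            Nat.cast_sub (le_of_lt hklt)]
          rw [ZMod.natCast_self]
          ring
      _ = 0 := hw0
  · -- easy direction
    intro hu
    rw [mem_cyclicCode] at hu
    intro v hv
    rw [mem_cyclicCode] at hv
    have hp := pairing hn0 hβ u v
    have hzero : ∀ k : Fin n,
        (∑ j : Fin n, algebraMap F E (u j) * β ^ (((n - (k:ℕ)) % n) * (j:ℕ))) *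
          (∑ j : Fin n, algebraMap F E (v j) * β ^ ((k:ℕ) * (j:ℕ))) = 0 := by
      intro k
      by_cases hkS : (k : ℕ) ∈ S
      · rw [hv (k:ℕ) hkS, mul_zero]
      · have hkT : (k : ℕ) ∈ T := hcov _ k.isLt hkS
        rw [hu _ (hTneg _ hkT), zero_mul]
    rw [Finset.sum_eq_zero (fun k _ => hzero k)] at hp
    have h2 : algebraMap F E (∑ j : Fin n, u j * v j) = 0 := by
      have h3 : (n : E) * algebraMap F E (∑ j : Fin n, u j * v j) = 0 := by
        rw [map_sum]
        simp only [map_mul]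
        exact hp.symm
      exact (mul_eq_zero.mp h3).resolve_left hnE
    exact (map_eq_zero_iff _ (algebraMap F E).injective).mp h2

end Alg

theorem stmt17 (s q m n : ℕ) (hs : 1 ≤ s) (hq : q = 2 ^ s)
    (hm : 2 ≤ m) (hmeven : Even m) (hn : n = q ^ m - 1)
    (F E : Type*) [Field F] [Fintype F] [DecidableEq F] [Field E] [Fintype E] [Algebra F E]
    (hF : Fintype.card F = q) (hE : Fintype.card E = q ^ m)
    (β : E) (hβ : orderOf β = n) :
    dualSet (cyclicCode F E n β (Tset q m 0) : Set (Fin n → F)) =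
        (cyclicCode F E n β (Tset q m 1 ∪ {0}) : Set (Fin n → F)) ∧
      dualSet (cyclicCode F E n β (Tset q m 1) : Set (Fin n → F)) =
        (cyclicCode F E n β (Tset q m 0 ∪ {0}) : Set (Fin n → F)) := by
  subst hn
  have hq2 : 2 ≤ q := by
    rw [hq]
    calc 2 = 2 ^ 1 := (pow_one 2).symm
      _ ≤ 2 ^ s := Nat.pow_le_pow_right (by omega) hs
  have hm1 : 1 ≤ m := by omega
  constructor
  · exact dual_cyclic hs hq hm1 rfl hF hE hβ (Tset q m 0) (Tset q m 1 ∪ {0})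
      (Tset_lt hq2 hm) (TsetU_lt hq2 hm) (Tset_cov hq2 hm (by omega))
      (Tset_disj hq2 hm (by omega)) (Tset_neg hq2 hm hmeven) (Tset_mulq hq2 hm)
  · exact dual_cyclic hs hq hm1 rfl hF hE hβ (Tset q m 1) (Tset q m 0 ∪ {0})
      (Tset_lt hq2 hm) (TsetU_lt hq2 hm) (Tset_cov hq2 hm (by omega))
      (Tset_disj hq2 hm (by omega)) (Tset_neg hq2 hm hmeven) (Tset_mulq hq2 hm)
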